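/- Let T be a set of non-constant monomials in S, indexed (in any way) by a well-ordered set. Then T is a regular sequence on S if and only if any two distinct monomials μ₁, μ₂ ∈ T are coprime, i.e. have no common divisor except units. -/

import Mathlib

open MvPolynomial

noncomputable section

/-- A regular sequence indexed by an ordered set `(Ω, lt)`:  the quotient by the whole
family is nonzero and each member is a non-zerodivisor modulo the earlier members. -/
def IsRegularSeq {R : Type*} [CommRing R] {Ω : Type*} (lt : Ω → Ω → Prop) (f : Ω → R) : Prop :=
  Ideal.span (Set.range f) ≠ ⊤ ∧
  ∀ α : Ω, ∀ h : R, h * f α ∈ Ideal.span (f '' {β | lt β α}) →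
    h ∈ Ideal.span (f '' {β | lt β α})

/-- The FR-condition: every finite strictly increasing subfamily is a regular sequence
in this order. -/
def SatisfiesFR {R : Type*} [CommRing R] {Ω : Type*} (lt : Ω → Ω → Prop) (f : Ω → R) : Prop :=
  ∀ (n : ℕ) (α : Fin n → Ω), (∀ i j : Fin n, i < j → lt (α i) (α j)) →
    IsRegularSeq (· < ·) (fun i => f (α i))

section Helpers
variable {k : Type*} [Field k]

lemma primeXnat (i : ℕ) : Prime (X i : MvPolynomial ℕ k) := by
  classical
  let e : ℕ ≃ Option {j : ℕ // j ≠ i} := (Equiv.optionSubtypeNe i).symm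
  let E : MvPolynomial ℕ k ≃ₐ[k] Polynomial (MvPolynomial {j : ℕ // j ≠ i} k) :=
    (renameEquiv k e).trans (optionEquivLeft k _)
  have hE : E (X i) = Polynomial.X := by
    have h1 : e i = none := Equiv.optionSubtypeNe_symm_self i
    simp [E, renameEquiv_apply, rename_X, h1, optionEquivLeft_X_none]
  have hp : Prime (E (X i)) := by rw [hE]; exact Polynomial.prime_X
  exact (MulEquiv.prime_iff E.toMulEquiv).1 hp

lemma unit_of_common_dvd {a b : ℕ →₀ ℕ} (hab : a ⊓ b = 0) (d : MvPolynomial ℕ k)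
    (h1 : d ∣ monomial a 1) (h2 : d ∣ monomial b 1) : IsUnit d := by
  by_contra hd
  have hd0 : d ≠ 0 := by
    rintro rfl
    rw [zero_dvd_iff, monomial_eq_zero] at h1
    exact one_ne_zero h1
  obtain ⟨p, hpirr, hpd⟩ := WfDvdMonoid.exists_irreducible_factor hd hd0
  have hp : Prime p := (UniqueFactorizationMonoid.irreducible_iff_prime).1 hpirr
  have key : ∀ c : ℕ →₀ ℕ, p ∣ monomial c 1 → ∃ i, c i ≠ 0 ∧ p ∣ X i := by
    intro c hc
    rw [show (monomial c (1:k)) = c.prod fun n e => (X n : MvPolynomial ℕ k) ^ e by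
      rw [monomial_eq]; simp] at hc
    rw [Finsupp.prod] at hc
    obtain ⟨i, hi, hpi⟩ := hp.exists_mem_finset_dvd hc
    exact ⟨i, Finsupp.mem_support_iff.1 hi, hp.dvd_of_dvd_pow hpi⟩
  obtain ⟨i, hia, hpi⟩ := key a (hpd.trans h1)
  obtain ⟨j, hjb, hpj⟩ := key b (hpd.trans h2)
  have hij : i = j := by
    have h1 := hpirr.associated_of_dvd (primeXnat i).irreducible hpi
    have h2 := hpirr.associated_of_dvd (primeXnat j).irreducible hpj
    exact X_dvd_X.1 (h1.symm.trans h2).dvd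
  subst hij
  have := DFunLike.congr_fun hab i
  rw [Finsupp.inf_apply] at this
  simp only [Finsupp.coe_zero, Pi.zero_apply] at this
  omega

end Helpers

/-- Lemma 1.22(1): a family of distinct non-constant monomials in `S = k[x₁,x₂,…]`,
indexed by a well-ordered set, is a regular sequence on `S` if and only if any two
distinct monomials among them have no common divisor except units. -/
theorem monomials_regular_iff_coprime {k : Type*} [Field k] {Ω : Type*}
    (lt : Ω → Ω → Prop) (hwo : IsWellOrder Ω lt)
    (a : Ω → (ℕ →₀ ℕ)) (ha : ∀ α, a α ≠ 0) (hinj : Function.Injective a) :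
    IsRegularSeq lt (fun α => (monomial (a α) 1 : MvPolynomial ℕ k)) ↔
      ∀ α β, α ≠ β → ∀ d : MvPolynomial ℕ k,
        d ∣ monomial (a α) 1 → d ∣ monomial (a β) 1 → IsUnit d := by
  classical
  have himg : ∀ S : Set Ω, (fun α => (monomial (a α) (1:k))) '' S
      = (fun s => monomial s (1:k)) '' (a '' S) := fun S =>
    (Set.image_image (fun s => monomial s (1:k)) a S).symm
  constructor
  · intro hreg
    have Q : ∀ β α, lt α β → a α ⊓ a β = 0 := by
      intro β
      induction β using WellFounded.induction (hwo.toIsWellFounded.wf) with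
      | _ β IH =>
      intro α hαβ
      by_contra hm
      set m := a α ⊓ a β with hmdef
      have hmem : (monomial (a α - m) 1 : MvPolynomial ℕ k) * monomial (a β) 1 ∈
          Ideal.span ((fun γ => (monomial (a γ) (1:k))) '' {γ | lt γ β}) := by
        have hfeq : a α - m + a β = a α + (a β - m) := by
          ext i
          have h1 : m i ≤ a α i := by
            rw [hmdef, Finsupp.inf_apply]; exact inf_le_left
          have h2 : m i ≤ a β i := by
            rw [hmdef, Finsupp.inf_apply]; exact inf_le_right
          simp only [Finsupp.add_apply, Finsupp.tsub_apply]
          omega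
        have heq : (monomial (a α - m) 1 : MvPolynomial ℕ k) * monomial (a β) 1 =
            monomial (a α) 1 * monomial (a β - m) 1 := by
          rw [monomial_mul, monomial_mul, hfeq]
        rw [heq]
        exact Ideal.mul_mem_right _ _ (Ideal.subset_span ⟨α, hαβ, rfl⟩)
      have hh := hreg.2 β _ hmem
      rw [himg, mem_ideal_span_monomial_image] at hh
      have hsup : a α - m ∈ ((monomial (a α - m) 1 : MvPolynomial ℕ k)).support := by
        rw [support_monomial, if_neg (one_ne_zero : (1:k) ≠ 0)]
        exact Finset.mem_singleton_self _
      obtain ⟨s, hs, hle⟩ := hh _ hsup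
      obtain ⟨γ, hγβ, rfl⟩ := hs
      by_cases hγα : γ = α
      · subst hγα
        obtain ⟨i, hi⟩ := Finsupp.ne_iff.1 hm
        rw [Finsupp.inf_apply] at hi
        simp only [Finsupp.coe_zero, Pi.zero_apply] at hi
        have h1 : m i ≤ a γ i := by rw [hmdef, Finsupp.inf_apply]; exact inf_le_left
        have h2 : m i = a γ i ⊓ a β i := by rw [hmdef, Finsupp.inf_apply]
        have h3 := hle i
        rw [Finsupp.tsub_apply] at h3
        omega
      · have hγle : a γ ≤ a α := hle.trans tsub_le_self
        have hne : a γ ⊓ a α ≠ 0 := by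
          rw [inf_eq_left.2 hγle]; exact ha γ
        rcases @trichotomous_of _ lt hwo.toTrichotomous γ α with h | h | h
        · exact hne (IH α hαβ γ h)
        · exact hγα h
        · exact hne (by rw [inf_comm]; exact IH γ hγβ α h)
    intro α β hne d hdα hdβ
    rcases @trichotomous_of _ lt hwo.toTrichotomous α β with h | h | h
    · exact unit_of_common_dvd (Q β α h) d hdα hdβ
    · exact absurd h hne
    · exact unit_of_common_dvd (by rw [inf_comm]; exact Q α β h) d hdα hdβ
  · intro hcop
    have hdisj : ∀ α β, α ≠ β → a α ⊓ a β = 0 := by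
      intro α β hne
      by_contra hm
      obtain ⟨i, hi⟩ := Finsupp.ne_iff.1 hm
      rw [Finsupp.inf_apply] at hi
      simp only [Finsupp.coe_zero, Pi.zero_apply] at hi
      have hdα : (X i : MvPolynomial ℕ k) ∣ monomial (a α) 1 :=
        X_dvd_monomial.2 (Or.inr (by omega))
      have hdβ : (X i : MvPolynomial ℕ k) ∣ monomial (a β) 1 :=
        X_dvd_monomial.2 (Or.inr (by omega))
      exact (primeXnat i).not_unit (hcop α β hne _ hdα hdβ)
    constructor
    · intro htop
      have h1 : (1 : MvPolynomial ℕ k) ∈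
          Ideal.span (Set.range fun α => (monomial (a α) (1:k))) := by
        rw [htop]; trivial
      rw [show (Set.range fun α => (monomial (a α) (1:k)))
            = (fun s => monomial s (1:k)) '' (Set.range a) by
          rw [← Set.range_comp]; rfl,
        mem_ideal_span_monomial_image] at h1
      have h0 : (0 : ℕ →₀ ℕ) ∈ (1 : MvPolynomial ℕ k).support := by
        rw [show (1 : MvPolynomial ℕ k) = monomial 0 1 by simp,
          support_monomial, if_neg (one_ne_zero : (1:k) ≠ 0)]
        exact Finset.mem_singleton_self _
      obtain ⟨s, ⟨α, rfl⟩, hle⟩ := h1 _ h0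
      refine ha α ?_
      ext i
      exact Nat.le_zero.1 (Finsupp.le_def.1 hle i)
    · intro α h hmem
      rw [himg, mem_ideal_span_monomial_image] at hmem ⊢
      intro t ht
      have htα : t + a α ∈ (h * monomial (a α) (1:k)).support := by
        rw [mem_support_iff, coeff_mul_monomial, mul_one]
        exact mem_support_iff.1 ht
      obtain ⟨s, hs, hle⟩ := hmem _ htα
      obtain ⟨β, hβα, rfl⟩ := hs
      refine ⟨a β, ⟨β, hβα, rfl⟩, ?_⟩
      have hneβ : β ≠ α := by
        rintro rfl
        haveI := hwo
        exact irrefl_of lt β hβα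
      have hd := hdisj β α hneβ
      intro i
      have h1 := DFunLike.congr_fun hd i
      rw [Finsupp.inf_apply] at h1
      simp only [Finsupp.coe_zero, Pi.zero_apply] at h1
      have h2 := hle i
      rw [Finsupp.add_apply] at h2
      omega
end
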